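/- Let X be a k-regular loopless graph on n vertices with least adjacency eigenvalue τ, and suppose an independent set S attains the Delsarte–Hoffman bound |S| = n·(−τ)/(k−τ). Then the characteristic vector z of S is a linear combination of the all-ones vector (a k-eigenvector) and a τ-eigenvector of A. -/

import Mathlib

open Matrix Finset

/-- Equality in the Delsarte–Hoffman bound forces the characteristic vector `z` of `S`
to be a linear combination of the all-ones vector and a (nonzero) `τ`-eigenvector. -/
theorem stmt18 (n k : ℕ) (hn : 0 < n)
    (A : Matrix (Fin n) (Fin n) ℝ) (hsym : A.IsSymm)
    (h01 : ∀ i j, A i j = 0 ∨ A i j = 1) (hloop : ∀ i, A i i = 0)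
    (hreg : ∀ i, ∑ j, A i j = k)
    (τ : ℝ) (hτneg : τ < 0)
    (hτeig : ∃ v : Fin n → ℝ, v ≠ 0 ∧ A.mulVec v = τ • v)
    (hτmin : ∀ (μ : ℝ) (v : Fin n → ℝ), v ≠ 0 → A.mulVec v = μ • v → τ ≤ μ)
    (S : Finset (Fin n)) (hind : ∀ i ∈ S, ∀ j ∈ S, i ≠ j → A i j = 0)
    (z : Fin n → ℝ) (hz : z = fun i => if i ∈ S then 1 else 0)
    (heq : (S.card : ℝ) = n * (-τ) / ((k : ℝ) - τ)) :
    ∃ (c : ℝ) (w : Fin n → ℝ), w ≠ 0 ∧ A.mulVec w = τ • w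
      ∧ z = c • (fun _ => (1 : ℝ)) + w := by
  classical
  subst hz
  set z : Fin n → ℝ := fun i => if i ∈ S then 1 else 0 with hzdef
  set s : ℝ := (S.card : ℝ) with hsdef
  have hne : (n : ℝ) ≠ 0 := (Nat.cast_pos.mpr hn).ne'
  have hnpos : (0 : ℝ) < n := Nat.cast_pos.mpr hn
  -- k ≥ 1
  obtain ⟨v, hv0, hveig⟩ := hτeig
  have hk : 0 < k := by
    by_contra hk0
    push_neg at hk0
    interval_cases k
    have hA0 : A = 0 := by
      ext i j
      have hnn : ∀ j' ∈ Finset.univ, 0 ≤ A i j' := fun j' _ => by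
        rcases h01 i j' with h | h <;> simp [h]
      have h := (Finset.sum_eq_zero_iff_of_nonneg hnn).mp
        (by simpa using hreg i) j (Finset.mem_univ j)
      simpa using h
    rw [hA0, Matrix.zero_mulVec] at hveig
    rcases smul_eq_zero.mp hveig.symm with h | h
    · exact absurd h hτneg.ne
    · exact hv0 h
  have hkpos : (0 : ℝ) < k := by exact_mod_cast hk
  have hkτ : (0 : ℝ) < (k : ℝ) - τ := by linarith
  have key : s * ((k : ℝ) - τ) = n * (-τ) := by
    rw [heq, div_mul_cancel₀ _ hkτ.ne']
  have hs_pos : 0 < s := by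
    rw [heq]
    exact div_pos (mul_pos hnpos (by linarith)) hkτ
  have hslt : s < n := by
    rw [heq, div_lt_iff₀ hkτ]
    nlinarith
  set c : ℝ := s / n with hcdef
  have hcn : c * n = s := div_mul_cancel₀ s hne
  have hc2 : c * ((k : ℝ) - τ) = -τ := by
    rw [hcdef, div_mul_eq_mul_div, key, mul_comm, mul_div_assoc, div_self hne, mul_one]
  set w : Fin n → ℝ := z - c • (fun _ => (1 : ℝ)) with hwdef
  -- Hermitian-ness of A - τ•1
  have hMh : (A - τ • 1 : Matrix (Fin n) (Fin n) ℝ).IsHermitian := by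
    rw [Matrix.IsHermitian, Matrix.conjTranspose_eq_transpose_of_trivial]
    ext i j
    simp [Matrix.one_apply, hsym.apply i j, eq_comm]
  -- A - τ•1 is PSD
  have hpsd : (A - τ • 1 : Matrix (Fin n) (Fin n) ℝ).PosSemidef := by
    apply hMh.posSemidef_iff_eigenvalues_nonneg.mpr
    intro i
    have hvne : (⇑(hMh.eigenvectorBasis i) : Fin n → ℝ) ≠ 0 := by
      intro h
      apply hMh.eigenvectorBasis.orthonormal.ne_zero i
      ext j
      exact congrFun h j
    have h1 := hMh.mulVec_eigenvectorBasis i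
    rw [Matrix.sub_mulVec, Matrix.smul_mulVec, Matrix.one_mulVec,
      sub_eq_iff_eq_add] at h1
    have hAe : A.mulVec ⇑(hMh.eigenvectorBasis i)
        = (hMh.eigenvalues i + τ) • ⇑(hMh.eigenvectorBasis i) := by
      rw [h1, add_smul]
    have := hτmin _ _ hvne hAe
    rw [Pi.zero_apply]
    linarith
  -- sum identities
  have hzsum : ∑ i, z i = s := by
    rw [hzdef]
    simp only [Finset.sum_ite_mem, Finset.univ_inter, Finset.sum_const, nsmul_eq_mul, mul_one]
    exact hsdef.symm
  have colsum : ∀ j, ∑ i, A i j = (k : ℝ) := by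
    intro j
    rw [← hreg j]
    exact Finset.sum_congr rfl fun i _ => (hsym.apply i j).symm ▸ rfl
  have hA1 : A *ᵥ (fun _ => (1 : ℝ)) = fun _ => (k : ℝ) := by
    ext i
    simp [Matrix.mulVec, dotProduct, hreg i]
  have hzz : z ⬝ᵥ z = s := by
    rw [← hzsum]
    refine Finset.sum_congr rfl fun i _ => ?_
    by_cases hi : i ∈ S <;> simp [hzdef, hi]
  have hz1 : z ⬝ᵥ (fun _ => (1 : ℝ)) = s := by
    rw [← hzsum]; simp [dotProduct, Finset.card_univ]
  have h1z : (fun _ => (1 : ℝ)) ⬝ᵥ z = s := by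
    rw [← hzsum]; simp [dotProduct, Finset.card_univ]
  have h11 : (fun _ : Fin n => (1 : ℝ)) ⬝ᵥ (fun _ : Fin n => (1 : ℝ)) = (n : ℝ) := by
    simp [dotProduct, Finset.card_univ]
  have hzA1 : z ⬝ᵥ (A *ᵥ fun _ => (1 : ℝ)) = (k : ℝ) * s := by
    rw [hA1, ← hzsum]
    simp [dotProduct, Finset.sum_mul, mul_comm, Finset.mul_sum]
  have h1A1 : (fun _ => (1 : ℝ)) ⬝ᵥ (A *ᵥ fun _ => (1 : ℝ)) = (k : ℝ) * n := by
    rw [hA1]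
    simp [dotProduct, mul_comm]
  have h1Az : (fun _ => (1 : ℝ)) ⬝ᵥ (A *ᵥ z) = (k : ℝ) * s := by
    simp only [dotProduct, Matrix.mulVec, one_mul]
    rw [Finset.sum_comm]
    calc ∑ j, ∑ i, A i j * z j
        = ∑ j, (∑ i, A i j) * z j := by
          refine Finset.sum_congr rfl fun j _ => ?_
          rw [Finset.sum_mul]
      _ = ∑ j, (k : ℝ) * z j := by
          refine Finset.sum_congr rfl fun j _ => ?_
          rw [colsum j]
      _ = (k : ℝ) * s := by rw [← Finset.mul_sum, hzsum]
  have hzAz : z ⬝ᵥ (A *ᵥ z) = 0 := by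
    simp only [dotProduct, Matrix.mulVec]
    have hterm : ∀ i, z i * ∑ j, A i j * z j
        = ∑ j, if i ∈ S ∧ j ∈ S then A i j else 0 := by
      intro i
      rw [Finset.mul_sum]
      refine Finset.sum_congr rfl fun j _ => ?_
      by_cases hi : i ∈ S <;> by_cases hj : j ∈ S <;> simp [hzdef, hi, hj]
    rw [Finset.sum_congr rfl fun i _ => hterm i]
    refine Finset.sum_eq_zero fun i _ => Finset.sum_eq_zero fun j _ => ?_
    by_cases hij : i ∈ S ∧ j ∈ S
    · rcases hij with ⟨hi, hj⟩
      by_cases h : i = j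
      · subst h; simp [hi, hloop i]
      · simp [hi, hj, hind i hi j hj h]
    · simp [hij]
  -- expansion of the quadratic form
  have expand : w ⬝ᵥ ((A - τ • 1) *ᵥ w) =
      z ⬝ᵥ (A *ᵥ z) - c * (z ⬝ᵥ (A *ᵥ fun _ => (1 : ℝ)))
        - c * ((fun _ => (1 : ℝ)) ⬝ᵥ (A *ᵥ z))
        + c ^ 2 * ((fun _ => (1 : ℝ)) ⬝ᵥ (A *ᵥ fun _ => (1 : ℝ)))
        - τ * (z ⬝ᵥ z) + τ * c * (z ⬝ᵥ fun _ => (1 : ℝ))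
        + τ * c * ((fun _ => (1 : ℝ)) ⬝ᵥ z)
        - τ * c ^ 2 * ((fun _ : Fin n => (1 : ℝ)) ⬝ᵥ (fun _ : Fin n => (1 : ℝ))) := by
    simp only [hwdef, Matrix.sub_mulVec, Matrix.smul_mulVec, Matrix.one_mulVec,
      Matrix.mulVec_sub, Matrix.mulVec_smul, sub_dotProduct, dotProduct_sub,
      smul_dotProduct, dotProduct_smul, smul_eq_mul, smul_sub]
    ring
  have hdot0 : w ⬝ᵥ ((A - τ • 1) *ᵥ w) = 0 := by
    rw [expand, hzAz, hzA1, h1Az, h1A1, hzz, hz1, h1z, h11]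
    linear_combination ((k : ℝ) * c - τ * c) * hcn - s * hc2
  have hMw : (A - τ • 1) *ᵥ w = 0 := by
    refine (hpsd.dotProduct_mulVec_zero_iff w).mp ?_
    simpa [star_trivial] using hdot0
  have hAw : A.mulVec w = τ • w := by
    rw [Matrix.sub_mulVec, Matrix.smul_mulVec, Matrix.one_mulVec,
      sub_eq_zero] at hMw
    exact hMw
  have hw0 : w ≠ 0 := by
    intro h
    obtain ⟨i, hi⟩ := Finset.card_pos.mp (Nat.cast_pos.mp hs_pos)
    have hwi := congrFun h i
    have : (1 : ℝ) - c = 0 := by simpa [hwdef, hzdef, hi] using hwi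
    have hc1 : c = 1 := by linarith
    have : s = (n : ℝ) := by
      rw [hcdef, div_eq_one_iff_eq hne] at hc1
      exact hc1
    linarith
  exact ⟨c, w, hw0, hAw, by funext i; simp [hwdef]⟩
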